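/- For every triple of real numbers (t₁, t₂, t₃) there exist real numbers k₁, k₂, k₃, k₄ such that k₁k₂ + k₃k₄ = t₁, k₁k₃ − k₂k₄ = t₂, and k₂k₃ + k₁k₄ = t₃. -/

import Mathlib

/-- Solvability of the quadratic system arising in the construction of horizontal
curves joining the origin to a purely vertical point of the quaternionic
Heisenberg group. -/
theorem quadratic_system_solvable (t₁ t₂ t₃ : ℝ) :
    ∃ k₁ k₂ k₃ k₄ : ℝ,
      k₁ * k₂ + k₃ * k₄ = t₁ ∧ k₁ * k₃ - k₂ * k₄ = t₂ ∧ k₂ * k₃ + k₁ * k₄ = t₃ := by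
  set f : ℝ → ℝ := fun c =>
    (t₁ - c * t₂) * (t₂ + c * t₁) / ((1 + c ^ 2) ^ 2) + c with hf
  have hden : ∀ c : ℝ, (0:ℝ) < (1 + c ^ 2) ^ 2 := by
    intro c; positivity
  have hcont : Continuous f := by
    apply Continuous.add _ continuous_id
    apply Continuous.div (by continuity) (by continuity)
    intro c; exact ne_of_gt (hden c)
  set K : ℝ := t₁ ^ 2 + t₂ ^ 2 with hK
  have hKnn : (0:ℝ) ≤ K := by positivity
  have hbound : ∀ c : ℝ, |(t₁ - c * t₂) * (t₂ + c * t₁) / ((1 + c ^ 2) ^ 2)| ≤ K := by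
    intro c
    rw [abs_div, abs_of_pos (hden c), div_le_iff₀ (hden c)]
    rw [abs_le]
    constructor
    · nlinarith [sq_nonneg (t₁ - c * t₂ + (t₂ + c * t₁)), hKnn, mul_nonneg hKnn (sq_nonneg c),
        mul_nonneg hKnn (sq_nonneg (c^2))]
    · nlinarith [sq_nonneg (t₁ - c * t₂ - (t₂ + c * t₁)), hKnn, mul_nonneg hKnn (sq_nonneg c),
        mul_nonneg hKnn (sq_nonneg (c^2))]
  have hsurj : Function.Surjective f := by
    apply Continuous.surjective hcont
    · apply Filter.tendsto_atTop_mono (f := fun c => c - K)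
      · intro c
        have := hbound c
        have h1 := abs_le.mp this
        simp only [hf]
        linarith [h1.1]
      · exact Filter.tendsto_atTop_add_const_right _ _ Filter.tendsto_id
    · apply Filter.tendsto_atBot_mono (f := fun c => c + K)
      · intro c
        have := hbound c
        have h1 := abs_le.mp this
        simp only [hf]
        linarith [h1.2]
      · exact Filter.tendsto_atBot_add_const_right _ _ Filter.tendsto_id
  obtain ⟨c, hc⟩ := hsurj t₃
  have hd : (1 + c ^ 2 : ℝ) ≠ 0 := by positivity
  refine ⟨1, (t₁ - c * t₂) / (1 + c ^ 2), (t₂ + c * t₁) / (1 + c ^ 2), c, ?_, ?_, ?_⟩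
  · field_simp
    ring
  · field_simp
    ring
  · have : (t₁ - c * t₂) * (t₂ + c * t₁) / ((1 + c ^ 2) ^ 2) + c = t₃ := hc
    field_simp at this ⊢
    linarith [this]
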